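/- Let k be a perfect field of characteristic p, 𝔖₁ = k[[u]] with Frobenius φ(Σ a_n u^n) = Σ a_n^p u^{pn}, and let (n_i)_{i ∈ ℤ/dℤ} be non-negative integers such that the classes s_i = Σ_{j=0}^{d-1} n_{i+j} p^{d-1-j}, taken modulo p^d - 1, are pairwise distinct. Let 𝔐 = ⊕_{i ∈ ℤ/dℤ} e_i 𝔖₁ with φ(e_i) = u^{n_i} e_{i+1}. For a non-negative integer s, the equation φ^d(x) = u^s x has a nonzero solution x ∈ 𝔐 if and only if there exists i ∈ ℤ/dℤ and a non-negative integer v with s - s_i = v(p^d - 1); in that case the set of nonzero solutions is { α u^v e_i : α ∈ k, α^{p^d} = α, α ≠ 0 }. -/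

import Mathlib

open PowerSeries

section Aux

variable {k : Type} [Field k] (p : ℕ) [hp : Fact p.Prime] [CharP k p]

instance : CharP (PowerSeries k) p :=
  charP_of_injective_ringHom (PowerSeries.C_injective (R := k)) p

lemma aux_coeff_pow_char (f : PowerSeries k) (m : ℕ) :
    coeff m (f ^ p) = if p ∣ m then (coeff (m / p) f) ^ p else 0 := by
  set t := f.trunc (m + 1) with ht
  have hdvd : (X : PowerSeries k) ^ (m + 1) ∣ f - ↑t := by
    rw [X_pow_dvd_iff]
    intro j hj
    simp [coeff_trunc, hj, ht]
  have hfp : f ^ p = (f - ↑t) ^ p + (↑t : PowerSeries k) ^ p := by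
    rw [← add_pow_char, sub_add_cancel]
  have h1 : coeff (R := k) m ((f - ↑t) ^ p) = 0 := by
    have : (X : PowerSeries k) ^ (m + 1) ∣ (f - ↑t) ^ p :=
      hdvd.trans (dvd_pow_self _ hp.out.ne_zero)
    exact X_pow_dvd_iff.mp this m (Nat.lt_succ_self m)
  have h2 : ((↑t : PowerSeries k)) ^ p = ((t ^ p : Polynomial k) : PowerSeries k) :=
    (Polynomial.coe_pow (φ := t) p).symm
  rw [hfp, map_add, h1, zero_add, h2, Polynomial.coeff_coe,
    ← Polynomial.map_frobenius_expand, Polynomial.coeff_map,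
    Polynomial.coeff_expand hp.out.pos]
  split_ifs with h
  · rw [frobenius_def, coeff_trunc, if_pos]
    exact Nat.lt_succ_of_le (Nat.div_le_self m p)
  · rw [map_zero]

lemma aux_coeff_pow_char_pow (f : PowerSeries k) (e m : ℕ) :
    coeff m (f ^ p ^ e) = if p ^ e ∣ m then (coeff (m / p ^ e) f) ^ p ^ e else 0 := by
  induction e generalizing m with
  | zero => simp
  | succ e ih =>
    have hpe : p ^ (e + 1) = p * p ^ e := by rw [pow_succ']
    conv_lhs => rw [pow_succ, pow_mul, aux_coeff_pow_char p (f ^ p ^ e) m]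
    by_cases h1 : p ∣ m
    · rw [if_pos h1, ih]
      have hiff : p ^ e ∣ m / p ↔ p ^ (e + 1) ∣ m := by
        rw [Nat.dvd_div_iff_mul_dvd h1, ← hpe]
      have hdiv : m / p / p ^ e = m / p ^ (e + 1) := by
        rw [Nat.div_div_eq_div_mul, ← hpe]
      by_cases h2 : p ^ (e + 1) ∣ m
      · rw [if_pos (hiff.mpr h2), if_pos h2, hdiv, ← pow_mul, ← pow_succ]
      · rw [if_neg (fun hc => h2 (hiff.mp hc)), if_neg h2, zero_pow hp.out.ne_zero]
    · rw [if_neg h1,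
        if_neg (fun hc => h1 ((dvd_pow_self p (Nat.succ_ne_zero e)).trans hc))]

/-- If `g ^ q = g` with `q = p^d ≥ 2` then `g` is constant. -/
lemma aux_pow_eq_self (d : ℕ) (hd : 1 ≤ d) (g : PowerSeries k)
    (hg : g ^ p ^ d = g) : g = C (constantCoeff g) := by
  have hq2 : 2 ≤ p ^ d :=
    le_trans hp.out.two_le (Nat.le_self_pow (by omega) p)
  ext m
  rcases Nat.eq_zero_or_pos m with rfl | hm
  · simp
  · rw [coeff_C, if_neg hm.ne']
    induction m using Nat.strong_induction_on with
    | _ m IH =>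
      have := aux_coeff_pow_char_pow p g d m
      rw [hg] at this
      rw [this]
      by_cases hdvd : p ^ d ∣ m
      · rw [if_pos hdvd]
        have h1 : 0 < m / p ^ d := Nat.div_pos (Nat.le_of_dvd hm hdvd) (by omega)
        have h2 : m / p ^ d < m := Nat.div_lt_self hm hq2
        rw [IH _ h2 h1, zero_pow (by omega)]
      · rw [if_neg hdvd]

end Aux

section Aux2

variable {k : Type} [Field k] (p : ℕ) [hp : Fact p.Prime] [CharP k p]

lemma aux_solve (d : ℕ) (hd : 1 ≤ d) (a b : ℕ) (f : PowerSeries k)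
    (hf : f ≠ 0) (heq : (X : PowerSeries k) ^ a * f ^ p ^ d = X ^ b * f) :
    ∃ (w : ℕ) (α : k), α ^ p ^ d = α ∧ α ≠ 0 ∧ f = C α * X ^ w ∧
      a + p ^ d * w = b + w := by
  have hfin : f.order < ⊤ := order_finite_iff_ne_zero.mpr hf
  set w := f.order.toNat with hwdef
  obtain ⟨g, hg⟩ := X_pow_order_dvd (φ := f)
  have hc0 : constantCoeff g ≠ 0 := by
    have h1 : coeff w f = constantCoeff g := by
      rw [hg, ← coeff_zero_eq_constantCoeff_apply]
      simpa using coeff_X_pow_mul g w 0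
    rw [← h1]
    exact coeff_order hf
  have key : (X : PowerSeries k) ^ (a + p ^ d * w) * g ^ p ^ d
      = X ^ (b + w) * g := by
    have h1 : (X : PowerSeries k) ^ (a + p ^ d * w) * g ^ p ^ d
        = X ^ a * f ^ p ^ d := by rw [hg]; ring
    have h2 : (X : PowerSeries k) ^ (b + w) * g = X ^ b * f := by rw [hg]; ring
    rw [h1, h2, heq]
  have hN : a + p ^ d * w = b + w := by
    rcases lt_trichotomy (a + p ^ d * w) (b + w) with h | h | h
    · exfalso
      have := congrArg (coeff (a + p ^ d * w)) key
      rw [coeff_X_pow_mul', if_pos le_rfl, Nat.sub_self,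
        coeff_X_pow_mul', if_neg (by omega), coeff_zero_eq_constantCoeff_apply,
        map_pow] at this
      exact pow_ne_zero _ hc0 this
    · exact h
    · exfalso
      have := congrArg (coeff (b + w)) key
      rw [coeff_X_pow_mul', if_neg (by omega),
        coeff_X_pow_mul' g (b + w) (b + w), if_pos le_rfl, Nat.sub_self,
        coeff_zero_eq_constantCoeff_apply] at this
      exact hc0 this.symm
  have hgq : g ^ p ^ d = g := by
    have hXne : (X : PowerSeries k) ^ (b + w) ≠ 0 := pow_ne_zero _ X_ne_zero
    apply mul_left_cancel₀ hXne
    rw [← hN] at key ⊢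
    exact key
  have hgC : g = C (constantCoeff g) := aux_pow_eq_self p d hd g hgq
  refine ⟨w, constantCoeff g, ?_, hc0, ?_, hN⟩
  · have := congrArg (constantCoeff) hgq
    rwa [map_pow] at this
  · conv_lhs => rw [hg, hgC]
    rw [mul_comm]

lemma aux_iter {d : ℕ} (n : ZMod d → ℕ)
    (Φ : (ZMod d → PowerSeries k) → (ZMod d → PowerSeries k))
    (hΦ : ∀ (x : ZMod d → PowerSeries k) (j : ZMod d),
      Φ x j = (X : PowerSeries k) ^ (n (j - 1)) * (x (j - 1)) ^ p)
    (m : ℕ) (x : ZMod d → PowerSeries k) (j : ZMod d) :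
    Φ^[m] x j = X ^ (∑ t ∈ Finset.range m, n (j - 1 - (t : ZMod d)) * p ^ t) *
      (x (j - (m : ZMod d))) ^ p ^ m := by
  induction m generalizing x with
  | zero => simp
  | succ m ih =>
    rw [Function.iterate_succ_apply, ih (Φ x), hΦ x (j - (m : ZMod d)),
      Finset.sum_range_succ]
    have h1 : j - (m : ZMod d) - 1 = j - 1 - (m : ZMod d) := by ring
    have h2 : j - (m : ZMod d) - 1 = j - (((m : ℕ) + 1 : ℕ) : ZMod d) := by
      push_cast; ring
    rw [h1]
    rw [show (x (j - 1 - (m : ZMod d))) = x (j - (((m : ℕ) + 1 : ℕ) : ZMod d)) by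
      rw [← h1, h2]]
    rw [mul_pow, ← pow_mul, ← pow_mul, ← mul_assoc, ← pow_add, ← pow_succ']

end Aux2

/-- Let `k` be a perfect field of characteristic `p`, `𝔖₁ = k[[u]]` with Frobenius
`f ↦ f^p`, and `(n_i)_{i ∈ ℤ/dℤ}` non-negative integers such that the classes of
`s_i = Σ_{j<d} n_{i+j} p^{d-1-j}` modulo `p^d - 1` are pairwise distinct. Let
`𝔐 = ⊕ e_i 𝔖₁` with `φ(e_i) = u^{n_i} e_{i+1}`, realized as
`Φ x j = u^{n_{j-1}} (x_{j-1})^p` on `ZMod d → k[[u]]`. For `s ≥ 0`, the equation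
`φ^d(x) = u^s x` has a nonzero solution iff there are `i` and `v ≥ 0` with
`s - s_i = v (p^d - 1)`; in that case the nonzero solutions are exactly the
`α u^v e_i` with `α ∈ k`, `α^{p^d} = α`, `α ≠ 0`. -/
theorem stmt_10 (p : ℕ) (hp : p.Prime) (k : Type) [Field k] [CharP k p]
    (hperf : Function.Bijective fun a : k => a ^ p)
    (d : ℕ) (hd : 1 ≤ d) (n : ZMod d → ℕ)
    (Φ : (ZMod d → PowerSeries k) → (ZMod d → PowerSeries k))
    (hΦ : ∀ (x : ZMod d → PowerSeries k) (j : ZMod d),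
      Φ x j = (X : PowerSeries k) ^ (n (j - 1)) * (x (j - 1)) ^ p)
    (s' : ZMod d → ℕ)
    (hs' : ∀ i : ZMod d, s' i = ∑ j ∈ Finset.range d, n (i + (j : ZMod d)) * p ^ (d - 1 - j))
    (hdist : ∀ i j : ZMod d, (s' i : ℤ) ≡ s' j [ZMOD ((p : ℤ) ^ d - 1)] → i = j)
    (s : ℕ) :
    ((∃ x : ZMod d → PowerSeries k, x ≠ 0 ∧
        Φ^[d] x = ((X : PowerSeries k) ^ s) • x) ↔
      (∃ (i : ZMod d) (v : ℕ), (s : ℤ) - s' i = (v : ℤ) * ((p : ℤ) ^ d - 1))) ∧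
    (∀ (i : ZMod d) (v : ℕ), (s : ℤ) - s' i = (v : ℤ) * ((p : ℤ) ^ d - 1) →
      ∀ x : ZMod d → PowerSeries k,
        (x ≠ 0 ∧ Φ^[d] x = ((X : PowerSeries k) ^ s) • x) ↔
          ∃ α : k, α ^ (p ^ d) = α ∧ α ≠ 0 ∧
            x = Pi.single i ((C (R := k) α) * (X : PowerSeries k) ^ v)) := by
  haveI : Fact p.Prime := ⟨hp⟩
  have hq2 : 2 ≤ p ^ d := le_trans hp.two_le (Nat.le_self_pow (by omega) p)
  -- rewrite s' as the sum appearing in the iterate formula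
  have hs'' : ∀ j : ZMod d,
      s' j = ∑ t ∈ Finset.range d, n (j - 1 - (t : ZMod d)) * p ^ t := by
    intro j
    rw [hs' j]
    conv_rhs => rw [← Finset.sum_range_reflect]
    refine Finset.sum_congr rfl fun t ht => ?_
    rw [Finset.mem_range] at ht
    have h2 : ((d - 1 - t : ℕ) : ZMod d) = -1 - (t : ZMod d) := by
      rw [show d - 1 - t = d - (1 + t) by omega, Nat.cast_sub (by omega)]
      push_cast
      rw [ZMod.natCast_self]
      ring
    rw [h2, show j - 1 - (-1 - (t : ZMod d)) = j + t by ring]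
  -- componentwise form of the iterate
  have hcomp : ∀ (x : ZMod d → PowerSeries k) (j : ZMod d),
      Φ^[d] x j = X ^ s' j * (x j) ^ p ^ d := by
    intro x j
    rw [aux_iter p n Φ hΦ d x j, ZMod.natCast_self, sub_zero, ← hs'' j]
  have hEq : ∀ x : ZMod d → PowerSeries k,
      (Φ^[d] x = ((X : PowerSeries k) ^ s) • x) ↔
        ∀ j, (X : PowerSeries k) ^ s' j * (x j) ^ p ^ d = X ^ s * (x j) := by
    intro x
    rw [funext_iff]
    refine forall_congr' fun j => ?_
    rw [hcomp, Pi.smul_apply, smul_eq_mul]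
  -- part 2
  have main2 : ∀ (i : ZMod d) (v : ℕ), (s : ℤ) - s' i = (v : ℤ) * ((p : ℤ) ^ d - 1) →
      ∀ x : ZMod d → PowerSeries k,
        (x ≠ 0 ∧ Φ^[d] x = ((X : PowerSeries k) ^ s) • x) ↔
          ∃ α : k, α ^ (p ^ d) = α ∧ α ≠ 0 ∧
            x = Pi.single i ((C α) * (X : PowerSeries k) ^ v) := by
    intro i v hiv x
    have hnat : s + v = s' i + p ^ d * v := by
      have : ((s + v : ℕ) : ℤ) = ((s' i + p ^ d * v : ℕ) : ℤ) := by
        push_cast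
        linear_combination hiv
      exact_mod_cast this
    constructor
    · rintro ⟨hx0, hxe⟩
      have hj := (hEq x).mp hxe
      -- every nonzero component sits at index i and is C α * X^v
      have hkey : ∀ j : ZMod d, x j ≠ 0 →
          j = i ∧ ∃ α : k, α ^ p ^ d = α ∧ α ≠ 0 ∧ x j = C α * X ^ v := by
        intro j hxj
        obtain ⟨w, α, hα1, hα2, hα3, hN⟩ := aux_solve p d hd (s' j) s (x j) hxj (hj j)
        have hjZ : (s : ℤ) - s' j = (w : ℤ) * ((p : ℤ) ^ d - 1) := by
          have : ((s' j + p ^ d * w : ℕ) : ℤ) = ((s + w : ℕ) : ℤ) := by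
            exact_mod_cast congrArg (Nat.cast : ℕ → ℤ) hN
          push_cast at this
          linear_combination -this
        have hji : j = i := by
          refine (hdist i j ?_).symm
          rw [Int.modEq_iff_dvd]
          exact ⟨(v : ℤ) - (w : ℤ), by linear_combination hiv - hjZ⟩
        subst hji
        have hne : ((p : ℤ) ^ d - 1) ≠ 0 :=
          sub_ne_zero.mpr (by exact_mod_cast (Nat.lt_of_lt_of_le Nat.one_lt_two hq2).ne')
        have hwv : (v : ℤ) = (w : ℤ) :=
          mul_right_cancel₀ hne (hiv.symm.trans hjZ)
        have hwv' : w = v := by exact_mod_cast hwv.symm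
        exact ⟨rfl, α, hα1, hα2, hwv' ▸ hα3⟩
      obtain ⟨j0, hj0⟩ := Function.ne_iff.mp hx0
      obtain ⟨hj0i, α, hα1, hα2, hα3⟩ := hkey j0 hj0
      subst hj0i
      refine ⟨α, hα1, hα2, ?_⟩
      funext j
      by_cases hji : j = j0
      · subst hji
        simp [Pi.single_eq_same, hα3]
      · rw [Pi.single_eq_of_ne hji]
        by_contra hne
        exact hji ((hkey j hne).1.trans rfl)
    · rintro ⟨α, hα1, hα2, rfl⟩
      have hmono : (C α * (X : PowerSeries k) ^ v) ≠ 0 :=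
        mul_ne_zero (fun h => hα2 (by simpa using congrArg (constantCoeff) h))
          (pow_ne_zero _ X_ne_zero)
      refine ⟨Function.ne_iff.mpr ⟨i, by simpa [Pi.single_eq_same] using hmono⟩, ?_⟩
      rw [hEq]
      intro j
      by_cases hji : j = i
      · subst hji
        rw [Pi.single_eq_same, mul_pow, ← map_pow, hα1, ← pow_mul]
        have hexp : s' j + v * p ^ d = s + v := by
          rw [mul_comm v (p ^ d)]
          exact hnat.symm
        calc (X : PowerSeries k) ^ s' j * (C α * X ^ (v * p ^ d))
            = C α * X ^ (s' j + v * p ^ d) := by rw [pow_add]; ring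
          _ = C α * X ^ (s + v) := by rw [hexp]
          _ = X ^ s * (C α * X ^ v) := by rw [pow_add]; ring
      · rw [Pi.single_eq_of_ne hji, zero_pow (Nat.lt_of_lt_of_le Nat.zero_lt_two hq2).ne', mul_zero, mul_zero]
  refine ⟨⟨?_, ?_⟩, main2⟩
  · rintro ⟨x, hx0, hxe⟩
    obtain ⟨j, hj⟩ := Function.ne_iff.mp hx0
    obtain ⟨w, α, hα1, hα2, hα3, hN⟩ :=
      aux_solve p d hd (s' j) s (x j) hj ((hEq x).mp hxe j)
    refine ⟨j, w, ?_⟩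
    have : ((s' j + p ^ d * w : ℕ) : ℤ) = ((s + w : ℕ) : ℤ) :=
      congrArg (Nat.cast : ℕ → ℤ) hN
    push_cast at this
    linear_combination -this
  · rintro ⟨i, v, hiv⟩
    exact ⟨Pi.single i (C 1 * X ^ v),
      (main2 i v hiv _).mpr ⟨1, one_pow _, one_ne_zero, rfl⟩⟩
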